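/- If p and q are integers with 0 < p ≤ q, p and q relatively prime, and p and q of distinct parities, then p·q·(q² − p²) is not a square. -/

import Mathlib

/-- Two integers have distinct parities if one is even and the other odd. -/
def DistinctParity (a b : ℤ) : Prop := (Even a ∧ Odd b) ∨ (Odd a ∧ Even b)

/-- An integer is a square if it is `i * i` for some nonnegative integer `i`. -/
def IsSqr (n : ℤ) : Prop := ∃ i : ℤ, 0 ≤ i ∧ i * i = n

private lemma sq_of_coprime_pos {a b c : ℤ} (ha : 0 < a) (h : IsCoprime a b)
    (heq : a * b = c ^ 2) : ∃ a0 : ℤ, 0 < a0 ∧ a = a0 ^ 2 := by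
  obtain ⟨a0, h0 | h0⟩ := Int.sq_of_isCoprime h heq
  · refine ⟨|a0|, ?_, by rw [h0, sq_abs]⟩
    rcases eq_or_ne a0 0 with rfl | hne
    · simp at h0; omega
    · exact abs_pos.mpr hne
  · nlinarith [sq_nonneg a0]

private lemma lt_of_sq_lt_sq {x y : ℤ} (hx : 0 ≤ x) (hy : 0 < y)
    (h : x ^ 2 < y ^ 2) : x < y := by nlinarith

private lemma le_self_sq {x : ℤ} (hx : 0 < x) : x ≤ x ^ 2 := by nlinarith

private lemma descent : ∀ Q : ℕ, ∀ p q : ℤ, q.natAbs ≤ Q → 0 < p → p < q →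
    IsCoprime p q → DistinctParity p q → ¬ IsSqr (p * q * (q ^ 2 - p ^ 2)) := by
  intro Q
  induction Q with
  | zero => intro p q hQ hp hpq _ _ _; omega
  | succ N ih =>
    intro p q hQ hp hpq hcop hpar hsq
    obtain ⟨r, hr0, hr⟩ := hsq
    have hq : 0 < q := hp.trans hpq
    -- the four factors are pairwise coprime
    have hodd1 : Odd (q - p) := by
      rcases hpar with ⟨he, ho⟩ | ⟨ho, he⟩
      · exact ho.sub_even he
      · exact he.sub_odd ho
    have hodd2 : Odd (q + p) := by
      rcases hpar with ⟨he, ho⟩ | ⟨ho, he⟩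
      · exact ho.add_even he
      · exact he.add_odd ho
    have h2 : IsCoprime p (q - p) := by
      have := hcop.add_mul_left_right (-1)
      simpa [mul_comm, sub_eq_add_neg] using this
    have h3 : IsCoprime p (q + p) := by
      have := hcop.add_mul_left_right 1
      simpa [mul_comm] using this
    have h4 : IsCoprime q (q - p) := by
      have := hcop.symm.add_mul_left_right (-1)
      have h' : IsCoprime q (p - q) := by simpa [mul_comm, sub_eq_add_neg] using this
      have := h'.neg_right
      simpa using this
    have h5 : IsCoprime q (q + p) := by
      have := hcop.symm.add_mul_left_right 1
      simpa [mul_comm, add_comm] using this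
    have h6 : IsCoprime (q - p) (q + p) := by
      obtain ⟨k, hk⟩ := hodd1
      have c2 : IsCoprime (q - p) 2 := ⟨1, -k, by omega⟩
      have c2p : IsCoprime (q - p) (2 * p) := c2.mul_right h2.symm
      have := c2p.add_mul_left_right 1
      have h' : IsCoprime (q - p) (2 * p + (q - p)) := by simpa using this
      have e : 2 * p + (q - p) = q + p := by ring
      rwa [e] at h'
    -- extract the four squares
    have hr' : p * (q * ((q - p) * (q + p))) = r ^ 2 := by
      linear_combination -hr
    have cop1 : IsCoprime p (q * ((q - p) * (q + p))) :=
      hcop.mul_right (h2.mul_right h3)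
    obtain ⟨a, ha, hap⟩ := sq_of_coprime_pos hp cop1 hr'
    have hrest : 0 < q * ((q - p) * (q + p)) := by
      apply mul_pos hq; apply mul_pos <;> omega
    obtain ⟨e, he, hee⟩ := sq_of_coprime_pos hrest cop1.symm (by rw [← hr']; ring)
    have cop2 : IsCoprime q ((q - p) * (q + p)) := h4.mul_right h5
    obtain ⟨b, hb, hbq⟩ := sq_of_coprime_pos hq cop2 hee
    have hrest2 : 0 < (q - p) * (q + p) := by apply mul_pos <;> omega
    obtain ⟨f, hf, hff⟩ := sq_of_coprime_pos hrest2 cop2.symm (by rw [← hee]; ring)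
    obtain ⟨c, hc, hcq⟩ := sq_of_coprime_pos (by omega : (0:ℤ) < q - p) h6 hff
    obtain ⟨d, hd, hdq⟩ := sq_of_coprime_pos (by omega : (0:ℤ) < q + p) h6.symm
      (by rw [← hff]; ring)
    -- c, d are odd
    have hcodd : Odd c := by
      rcases Int.even_or_odd c with hev | hod
      · exfalso; rw [hcq] at hodd1
        exact (Int.not_even_iff_odd.mpr hodd1) (by simpa [sq] using hev.mul_right c)
      · exact hod
    have hdodd : Odd d := by
      rcases Int.even_or_odd d with hev | hod
      · exfalso; rw [hdq] at hodd2
        exact (Int.not_even_iff_odd.mpr hodd2) (by simpa [sq] using hev.mul_right d)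
      · exact hod
    have hdc : c < d :=
      lt_of_sq_lt_sq (le_of_lt hc) hd (by linarith only [hcq, hdq, hp])
    -- u = (d+c)/2, v = (d-c)/2
    obtain ⟨k, hk⟩ := hdodd
    obtain ⟨l, hl⟩ := hcodd
    obtain ⟨u, v, hdu, hcu⟩ : ∃ u v : ℤ, d = u + v ∧ c = u - v :=
      ⟨k + l + 1, k - l, by omega, by omega⟩
    have hu : 0 < u := by omega
    have hv : 0 < v := by omega
    subst hdu hcu
    have huv_sq2 : 2 * (u ^ 2 + v ^ 2) = 2 * b ^ 2 := by
      linear_combination 2 * hbq - hdq - hcq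
    have huv_sq : u ^ 2 + v ^ 2 = b ^ 2 := by linarith only [huv_sq2]
    have hpuv2 : 2 * p = 4 * (u * v) := by linear_combination hdq - hcq
    have hpuv : p = 2 * (u * v) := by linarith only [hpuv2]
    -- a is even, p = 2uv, uv = 2*a0^2
    have hpeven : Even p := ⟨u * v, by omega⟩
    have haeven : Even a := by
      rw [hap] at hpeven
      exact (Int.even_pow.mp hpeven).1
    obtain ⟨a0, ha0⟩ := haeven
    rw [ha0] at hap
    have huva2 : 2 * (u * v) = 4 * a0 ^ 2 := by linear_combination hap - hpuv
    have huva : u * v = 2 * a0 ^ 2 := by linarith only [huva2]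
    -- u, v coprime
    have hcd_cop : IsCoprime (u - v) (u + v) := by
      have h1 : IsCoprime (u - v) (q + p) :=
        h6.of_isCoprime_of_dvd_left (by rw [hcq]; exact dvd_pow_self _ two_ne_zero)
      exact h1.of_isCoprime_of_dvd_right (by rw [hdq]; exact dvd_pow_self _ two_ne_zero)
    have huv_cop : IsCoprime u v := by
      obtain ⟨s, t, hst⟩ := hcd_cop
      exact ⟨s + t, t - s, by linear_combination hst⟩
    -- Pythagorean triple classification
    have htrip : PythagoreanTriple u v b := by
      unfold PythagoreanTriple; linear_combination huv_sq
    have hgcd : Int.gcd u v = 1 := Int.isCoprime_iff_gcd_eq_one.mp huv_cop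
    obtain ⟨m, n, hmn, hbmn, hgmn, hpmn⟩ :=
      PythagoreanTriple.coprime_classification.mp ⟨htrip, hgcd⟩
    have hbmn' : b = m ^ 2 + n ^ 2 := by
      rcases hbmn with h | h
      · exact h
      · exfalso; linarith only [hb, sq_nonneg m, sq_nonneg n, h]
    -- uv = 2mn(m^2-n^2), with mn > 0 and m^2 > n^2
    have key1 : u * v = 2 * m * n * (m ^ 2 - n ^ 2) := by
      rcases hmn with ⟨h1, h2⟩ | ⟨h1, h2⟩ <;> rw [h1, h2] <;> ring
    have hmnpos : 0 < m * n := by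
      rcases hmn with ⟨h1, h2⟩ | ⟨h1, h2⟩
      · rw [h2] at hv; linarith only [hv]
      · rw [h1] at hu; linarith only [hu]
    have hm2n2 : n ^ 2 < m ^ 2 := by
      rcases hmn with ⟨h1, h2⟩ | ⟨h1, h2⟩
      · rw [h1] at hu; linarith only [hu]
      · rw [h2] at hv; linarith only [hv]
    -- pass to absolute values
    set m' : ℤ := |m| with hm'd
    set n' : ℤ := |n| with hn'd
    have hmm : m' ^ 2 = m ^ 2 := sq_abs m
    have hnn : n' ^ 2 = n ^ 2 := sq_abs n
    have hmn' : n' * m' = m * n := by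
      rw [hn'd, hm'd, ← abs_mul, mul_comm]; exact abs_of_pos hmnpos
    have hn'pos : 0 < n' := by
      rw [hn'd, abs_pos]; rintro rfl; simp at hmnpos
    have hm'pos : 0 < m' := by
      rw [hm'd, abs_pos]; rintro rfl; simp at hmnpos
    have hn'm' : n' < m' :=
      lt_of_sq_lt_sq (le_of_lt hn'pos) hm'pos (by rw [hmm, hnn]; exact hm2n2)
    have hcop' : IsCoprime n' m' := by
      rw [Int.isCoprime_iff_gcd_eq_one, hm'd, hn'd]
      simpa [Int.gcd, Int.natAbs_abs, Nat.gcd_comm] using hgmn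
    have hpar' : DistinctParity n' m' := by
      have hEa : ∀ x : ℤ, Even x → Even |x| := by
        intro x hx
        rcases abs_choice x with h | h <;> rw [h]
        · exact hx
        · exact hx.neg
      have em : m % 2 = 0 → Even m' := fun h => hEa m (Int.even_iff.mpr h)
      have om : m % 2 = 1 → Odd m' := fun h => odd_abs.mpr (Int.odd_iff.mpr h)
      have enn : n % 2 = 0 → Even n' := fun h => hEa n (Int.even_iff.mpr h)
      have onn : n % 2 = 1 → Odd n' := fun h => odd_abs.mpr (Int.odd_iff.mpr h)
      rcases hpmn with ⟨h1, h2⟩ | ⟨h1, h2⟩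
      · exact Or.inr ⟨onn h2, em h1⟩
      · exact Or.inl ⟨enn h2, om h1⟩
    have hsq' : IsSqr (n' * m' * (m' ^ 2 - n' ^ 2)) := by
      refine ⟨|a0|, abs_nonneg _, ?_⟩
      have hdbl : 2 * (m * n * (m ^ 2 - n ^ 2)) = 2 * (a0 ^ 2) := by
        linear_combination huva - key1
      rw [abs_mul_abs_self, hmm, hnn, hmn']
      linarith only [hdbl]
    -- measure decreases: m' < q
    have hbq2 : b ≤ q := by linarith only [le_self_sq hb, hbq]
    have hm'b : m' < b := by
      have h1 : 0 < n' ^ 2 := by positivity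
      linarith only [le_self_sq hm'pos, hbmn', hmm, hnn, h1]
    have hm'q : m' < q := by linarith only [hm'b, hbq2]
    exact ih n' m' (by omega) hn'pos hn'm' hcop' hpar' hsq'

/-- Refined form of Diophantus' 20th problem. -/
theorem diophantus20_refined (p q : ℤ) (hp : 0 < p) (hpq : p ≤ q)
    (hcop : IsCoprime p q) (hpar : DistinctParity p q) :
    ¬ IsSqr (p * q * (q ^ 2 - p ^ 2)) := by
  rcases lt_or_eq_of_le hpq with hlt | heq
  · exact descent q.natAbs p q le_rfl hp hlt hcop hpar
  · subst heq
    have hu : IsUnit p := isCoprime_self.mp hcop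
    have : p = 1 := by
      rcases Int.isUnit_iff.mp hu with h | h
      · exact h
      · omega
    subst this
    rcases hpar with ⟨he, _⟩ | ⟨_, he⟩ <;> exact absurd he (by decide)
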